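/- arXiv:1305.2584 — 2 statements merged into one kernel-verified Lean document; each statement's English description precedes it below -/
import Mathlib

section
/- Let Γ be a strongly regular graph with parameters (v, k, λ, μ) on vertex set V, with adjacency matrix A, and assume 0 < μ and k < v − 1. Let s = (λ − μ − √((λ−μ)² + 4(k−μ)))/2 be the negative eigenvalue of A. For each vertex i let y_i be the i-th column of the matrix A − sI, let z_i = y_i − (1/v)·Σ_{j∈V} y_j, and let x_i = z_i/‖z_i‖. Then for all distinct vertices i, j: ⟨x_i, x_j⟩ = p if i and j are adjacent and ⟨x_i, x_j⟩ = q if i and j are not adjacent, where p = (λ − 2s − β)/(s² + k − β), q = (μ − β)/(s² + k − β), and β = (1/v)(s² + k + k(λ − 2s) + (v − k − 1)μ). -/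
open Finset in
/-- Euclidean representation of a strongly regular graph: the normalized, centered columns
of `A - s•I` (where `s` is the negative eigenvalue of the adjacency matrix `A`) form a
spherical two-distance set with inner products `p` (adjacent pairs) and `q`
(non-adjacent pairs). -/
theorem srg_euclidean_representation
    {V : Type*} [Fintype V] [DecidableEq V] (G : SimpleGraph V) [DecidableRel G.Adj]
    (v k l μ : ℕ) (h : G.IsSRGWith v k l μ) (hμ : 0 < μ) (hk : k + 1 < v)
    (s : ℝ) (hs : s = ((l : ℝ) - μ - Real.sqrt (((l : ℝ) - μ)^2 + 4*((k : ℝ) - μ))) / 2)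
    (β p q : ℝ)
    (hβ : β = (1 / (v : ℝ)) * (s^2 + k + k*((l : ℝ) - 2*s) + ((v : ℝ) - k - 1)*μ))
    (hp : p = ((l : ℝ) - 2*s - β) / (s^2 + k - β))
    (hq : q = ((μ : ℝ) - β) / (s^2 + k - β))
    (y : V → EuclideanSpace ℝ V)
    (hy : ∀ i, y i = (EuclideanSpace.equiv V ℝ).symm
      (fun j => (G.adjMatrix ℝ - s • (1 : Matrix V V ℝ)) j i))
    (z : V → EuclideanSpace ℝ V)
    (hz : ∀ i, z i = y i - (1 / (v : ℝ)) • ∑ j, y j)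
    (x : V → EuclideanSpace ℝ V)
    (hx : ∀ i, x i = ‖z i‖⁻¹ • z i) :
    ∀ i j, i ≠ j →
      (G.Adj i j → inner ℝ (x i) (x j) = p) ∧
      (¬ G.Adj i j → inner ℝ (x i) (x j) = q) := by
  have hcard : Fintype.card V = v := h.card
  have hv0 : (0:ℝ) < v := by
    have : 0 < v := by omega
    exact_mod_cast this
  have hvne : (v:ℝ) ≠ 0 := ne_of_gt hv0
  set A : Matrix V V ℝ := G.adjMatrix ℝ with hA
  set M : Matrix V V ℝ := A - s • 1 with hM
  -- entries of y
  have hyapp : ∀ i t, y i t = M t i := by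
    intro i t
    rw [hy]
    rfl
  -- symmetry of M
  have hMsymm : ∀ a b, M a b = M b a := by
    intro a b
    by_cases hab : a = b
    · subst hab; rfl
    · by_cases hadj : G.Adj a b
      · have hadj' : G.Adj b a := hadj.symm
        simp [hM, hA, Matrix.sub_apply, Matrix.smul_apply, Matrix.one_apply,
          SimpleGraph.adjMatrix_apply, hab, Ne.symm hab, hadj, hadj']
      · have hadj' : ¬ G.Adj b a := fun h' => hadj h'.symm
        simp [hM, hA, Matrix.sub_apply, Matrix.smul_apply, Matrix.one_apply,
          SimpleGraph.adjMatrix_apply, hab, Ne.symm hab, hadj, hadj']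
  -- inner products as matrix entries
  have hSij : ∀ i j, (inner ℝ (y i) (y j) : ℝ) = (M * M) i j := by
    intro i j
    rw [PiLp.inner_apply, Matrix.mul_apply]
    refine Finset.sum_congr rfl fun t _ => ?_
    rw [hyapp, hyapp, RCLike.inner_apply, conj_trivial, hMsymm i t, mul_comm]
  have hMM : M * M = A * A - s • A - s • A + (s*s) • (1 : Matrix V V ℝ) := by
    rw [hM]
    simp only [Matrix.sub_mul, Matrix.mul_sub, Matrix.smul_mul, Matrix.mul_smul,
      Matrix.one_mul, Matrix.mul_one, smul_sub, smul_smul]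
    abel
  have hAA := h.matrix_eq (α := ℝ)
  rw [pow_two] at hAA
  -- key: values of inner products
  have hkey : ∀ i j, (inner ℝ (y i) (y j) : ℝ) =
      if i = j then s^2 + (k:ℝ) else if G.Adj i j then (l:ℝ) - 2*s else (μ:ℝ) := by
    intro i j
    rw [hSij, hMM, hAA]
    simp only [Matrix.add_apply, Matrix.sub_apply, Matrix.smul_apply, Matrix.one_apply,
      SimpleGraph.adjMatrix_apply, SimpleGraph.compl_adj]
    simp only [nsmul_eq_mul, smul_eq_mul]
    by_cases hij : i = j
    · subst hij
      simp [hA, SimpleGraph.adjMatrix_apply, SimpleGraph.irrefl]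
      ring
    · by_cases ha : G.Adj i j
      · simp [hA, SimpleGraph.adjMatrix_apply, hij, ha]
        ring
      · simp [hA, SimpleGraph.adjMatrix_apply, hij, ha]
  -- row sums
  set R : ℝ := s^2 + k + k*((l : ℝ) - 2*s) + ((v : ℝ) - k - 1)*μ with hR
  have hrow : ∀ i, ∑ t, (inner ℝ (y i) (y t) : ℝ) = R := by
    intro i
    have hconst : ∀ t, (inner ℝ (y i) (y t) : ℝ) =
        if i = t then s^2 + (k:ℝ) else if G.Adj i t then (l:ℝ) - 2*s else (μ:ℝ) := hkey i
    calc ∑ t, (inner ℝ (y i) (y t) : ℝ)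
        = ∑ t, (if i = t then s^2 + (k:ℝ) else if G.Adj i t then (l:ℝ) - 2*s else (μ:ℝ)) :=
          Finset.sum_congr rfl fun t _ => hconst t
      _ = R := by
        rw [← Finset.sum_erase_add _ _ (Finset.mem_univ i), if_pos rfl]
        have h1 : ∑ t ∈ Finset.univ.erase i,
            (if i = t then s^2 + (k:ℝ) else if G.Adj i t then (l:ℝ) - 2*s else (μ:ℝ))
            = ∑ t ∈ Finset.univ.erase i, (if G.Adj i t then (l:ℝ) - 2*s else (μ:ℝ)) := by
          refine Finset.sum_congr rfl fun t ht => ?_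
          rw [if_neg (fun he => (Finset.ne_of_mem_erase ht) he.symm)]
        rw [h1, Finset.sum_ite]
        have hfilt : Finset.filter (fun t => G.Adj i t) (Finset.univ.erase i)
            = G.neighborFinset i := by
          ext t
          simp [SimpleGraph.mem_neighborFinset, Finset.mem_erase, Finset.mem_filter]
          intro ha
          exact fun he => G.loopless.irrefl i (he ▸ ha)
        have hcard1 : (Finset.filter (fun t => G.Adj i t) (Finset.univ.erase i)).card = k := by
          rw [hfilt]
          exact h.regular i
        have hcard2 : (Finset.filter (fun t => ¬ G.Adj i t) (Finset.univ.erase i)).card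
            = v - 1 - k := by
          have := Finset.card_filter_add_card_filter_not
            (s := Finset.univ.erase i) (p := fun t => G.Adj i t)
          rw [hcard1, Finset.card_erase_of_mem (Finset.mem_univ i), Finset.card_univ, hcard] at this
          omega
        rw [Finset.sum_const, Finset.sum_const, hcard1, hcard2, nsmul_eq_mul, nsmul_eq_mul]
        have : ((v - 1 - k : ℕ) : ℝ) = (v:ℝ) - k - 1 := by
          have h1 : ((v - 1 - k : ℕ) : ℝ) = ((v : ℕ) : ℝ) - ((k + 1 : ℕ) : ℝ) := by
            rw [← Nat.cast_sub (by omega)]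
            congr 1
            omega
          rw [h1]
          push_cast
          ring
        rw [this, hR]
        ring
  -- β = R / v
  have hβR : β = R / v := by rw [hβ, hR]; ring
  -- centered inner products
  have hzz : ∀ i j, (inner ℝ (z i) (z j) : ℝ) = (inner ℝ (y i) (y j) : ℝ) - β := by
    intro i j
    have hS1 : ∀ a, (inner ℝ (y a) (∑ t, y t) : ℝ) = R := by
      intro a
      rw [inner_sum]
      exact hrow a
    have hS2 : ∀ a, (inner ℝ (∑ t, y t) (y a) : ℝ) = R := by
      intro a
      rw [real_inner_comm]
      exact hS1 a
    have hS3 : (inner ℝ (∑ t, y t) (∑ t, y t) : ℝ) = v * R := by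
      rw [sum_inner]
      rw [Finset.sum_congr rfl fun t _ => hS1 t]
      rw [Finset.sum_const, Finset.card_univ, hcard, nsmul_eq_mul]
    rw [hz i, hz j, inner_sub_left, inner_sub_right, inner_sub_right,
      real_inner_smul_right, real_inner_smul_left, real_inner_smul_left,
      real_inner_smul_right, hS1, hS2, hS3, hβR]
    field_simp
    ring
  -- parameter identity
  have hpe : k * (k - l - 1) = (v - k - 1) * μ := h.param_eq G (by omega)
  have hkl : k ≠ 0 ∧ k - l - 1 ≠ 0 := by
    rw [← Nat.mul_ne_zero_iff, hpe]
    exact Nat.mul_ne_zero (by omega) (by omega)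
  have hpeR : (k:ℝ) * ((k:ℝ) - l - 1) = ((v:ℝ) - k - 1) * μ := by
    have := congrArg (Nat.cast : ℕ → ℝ) hpe
    push_cast at this
    rw [Nat.cast_sub (by omega), Nat.cast_sub (by omega), Nat.cast_sub (by omega),
      Nat.cast_sub (by omega)] at this
    push_cast at this
    linarith [this]
  -- β = (k-s)^2 / v
  have hβ' : β = ((k:ℝ) - s)^2 / v := by
    rw [hβR, hR, ← hpeR]
    field_simp
    ring
  -- positivity
  have hkR : (1:ℝ) ≤ k := by
    have : 1 ≤ k := by omega
    exact_mod_cast this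
  have hvk : (k:ℝ) + 2 ≤ v := by
    have : k + 2 ≤ v := by omega
    exact_mod_cast this
  have hpos : 0 < s^2 + (k:ℝ) - β := by
    rw [hβ', sub_pos, div_lt_iff₀ hv0]
    have hv1 : (0:ℝ) < (v:ℝ) - 1 := by linarith
    have ha1 : (2:ℝ)*((k:ℝ)+1) ≤ ((v:ℝ)-1)*((v:ℝ)-(k:ℝ)) := by
      nlinarith [mul_nonneg (show (0:ℝ) ≤ (v:ℝ)-(k:ℝ)-2 by linarith)
        (show (0:ℝ) ≤ (k:ℝ)+1 by linarith), sq_nonneg ((v:ℝ)-(k:ℝ)-2)]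
    have h2' : (k:ℝ)*((2:ℝ)*((k:ℝ)+1)) ≤ (k:ℝ)*(((v:ℝ)-1)*((v:ℝ)-(k:ℝ))) :=
      mul_le_mul_of_nonneg_left ha1 (by linarith)
    have h2'' : (k:ℝ)*((2:ℝ)*((k:ℝ)+1)) = 2*(k:ℝ)^2 + 2*(k:ℝ) := by ring
    rw [h2''] at h2'
    have key : ((v:ℝ)-1) * ((s^2+(k:ℝ))*(v:ℝ) - ((k:ℝ)-s)^2)
        = (((v:ℝ)-1)*s + (k:ℝ))^2 + ((k:ℝ)*(((v:ℝ)-1)*((v:ℝ)-(k:ℝ))) - (k:ℝ)^2) := by ring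
    have hT : 0 < ((v:ℝ)-1) * ((s^2+(k:ℝ))*(v:ℝ) - ((k:ℝ)-s)^2) := by
      rw [key]
      have hsq := sq_nonneg (((v:ℝ)-1)*s + (k:ℝ))
      have hk2 := sq_nonneg (k:ℝ)
      linarith
    by_contra hcon
    push_neg at hcon
    have h3 : 0 ≤ ((v:ℝ)-1) * (((k:ℝ)-s)^2 - (s^2+(k:ℝ))*(v:ℝ)) :=
      mul_nonneg (le_of_lt hv1) (by linarith)
    have h4 : ((v:ℝ)-1) * (((k:ℝ)-s)^2 - (s^2+(k:ℝ))*(v:ℝ))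
        = -(((v:ℝ)-1) * ((s^2+(k:ℝ))*(v:ℝ) - ((k:ℝ)-s)^2)) := by ring
    rw [h4] at h3
    linarith
  -- norms
  have hnz : ∀ i, (inner ℝ (z i) (z i) : ℝ) = s^2 + (k:ℝ) - β := by
    intro i
    rw [hzz, hkey, if_pos rfl]
  have hnorm : ∀ i, ‖z i‖ = Real.sqrt (s^2 + (k:ℝ) - β) := by
    intro i
    rw [← hnz i, real_inner_self_eq_norm_sq, Real.sqrt_sq (norm_nonneg _)]
  -- final
  intro i j hij
  have hxx : (inner ℝ (x i) (x j) : ℝ) = ((inner ℝ (y i) (y j) : ℝ) - β) / (s^2 + (k:ℝ) - β) := by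
    rw [hx i, hx j, real_inner_smul_left, real_inner_smul_right, hzz, hnorm, hnorm]
    have ha2 : (Real.sqrt (s^2+(k:ℝ)-β))⁻¹ * ((Real.sqrt (s^2+(k:ℝ)-β))⁻¹
          * ((inner ℝ (y i) (y j) : ℝ) - β))
        = ((inner ℝ (y i) (y j) : ℝ) - β)
          / (Real.sqrt (s^2+(k:ℝ)-β) * Real.sqrt (s^2+(k:ℝ)-β)) := by
      rw [div_eq_mul_inv, mul_inv]
      ring
    rw [ha2, Real.mul_self_sqrt (le_of_lt hpos)]
  constructor
  · intro ha
    rw [hxx, hkey, if_neg hij, if_pos ha, hp]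
  · intro ha
    rw [hxx, hkey, if_neg hij, if_neg ha, hq]
end

section
/- Let n ≥ 1 be an integer, let α = (1 + √(1 + 16n))/(4n), and let γ = α/(4nα − 1). Then the point c = (0, ..., 0 | γ, ..., γ) ∈ ℝ^{66n} (zero in the first 65n coordinates and γ in the last n coordinates) is at distance exactly R = 4√n/√(16n + 1) from the point (0, ..., 0 | α, ..., α) and from every point of the form (0,...,0, (√15/4)·x, 0,...,0 | 0,...,0, 1/4, 0,...,0) with x a unit vector in ℝ^65 placed in the k-th block (1 ≤ k ≤ n); moreover R < 1. -/
set_option maxHeartbeats 800000 in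
/-- With `α = (1 + √(1+16n))/(4n)` and `γ = α/(4nα - 1)`, the point `(0,…,0 | γ,…,γ)` of
`ℝ^{66n}` (coordinates indexed by `(Fin n × Fin 65) ⊕ Fin n`) is at distance
`R = 4√n/√(16n+1)` both from `(0,…,0 | α,…,α)` and from every point
`(0,…,0,(√15/4)·x,0,…,0 | 0,…,0,1/4,0,…,0)` with `x` a unit vector of `ℝ⁶⁵` placed in the
`k`-th block; moreover `R < 1`. -/
theorem dist_center_eq_R (n : ℕ) (hn : 1 ≤ n)
    (α : ℝ) (hα : α = (1 + Real.sqrt (1 + 16 * n)) / (4 * n))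
    (γ : ℝ) (hγ : γ = α / (4 * n * α - 1))
    (R : ℝ) (hR : R = 4 * Real.sqrt n / Real.sqrt (16 * n + 1))
    (c : EuclideanSpace ℝ ((Fin n × Fin 65) ⊕ Fin n))
    (hc : c = (EuclideanSpace.equiv ((Fin n × Fin 65) ⊕ Fin n) ℝ).symm
      (Sum.elim (fun _ => (0 : ℝ)) (fun _ => γ)))
    (v : EuclideanSpace ℝ ((Fin n × Fin 65) ⊕ Fin n))
    (hv : v = (EuclideanSpace.equiv ((Fin n × Fin 65) ⊕ Fin n) ℝ).symm
      (Sum.elim (fun _ => (0 : ℝ)) (fun _ => α))) :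
    dist c v = R ∧
    (∀ (k : Fin n) (x : EuclideanSpace ℝ (Fin 65)), ‖x‖ = 1 →
      ∀ w : EuclideanSpace ℝ ((Fin n × Fin 65) ⊕ Fin n),
        w = (EuclideanSpace.equiv ((Fin n × Fin 65) ⊕ Fin n) ℝ).symm
          (Sum.elim (fun li => if li.1 = k then (Real.sqrt 15 / 4) * x li.2 else 0)
                    (fun l => if l = k then (1 / 4 : ℝ) else 0)) →
        dist c w = R) ∧
    R < 1 := by
  have hN1 : (1:ℝ) ≤ (n:ℝ) := by exact_mod_cast hn
  set N : ℝ := (n:ℝ) with hNdef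
  have hN0 : (0:ℝ) < N := by linarith
  set s : ℝ := Real.sqrt (1 + 16 * N) with hsdef
  have hs2 : s ^ 2 = 1 + 16 * N := Real.sq_sqrt (by positivity)
  have hs0 : 0 < s := Real.sqrt_pos.mpr (by linarith)
  have hs1 : 1 < s := by nlinarith
  have hNne : N ≠ 0 := ne_of_gt hN0
  have hαe : 4 * N * α = 1 + s := by
    rw [hα]; field_simp
  have hαs : α * (s - 1) = 4 := by
    have h1 : α * (s - 1) * (s + 1) = 4 * (s + 1) := by nlinarith [hαe, hs2]
    have hsp : s + 1 ≠ 0 := by linarith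
    exact mul_right_cancel₀ hsp h1
  have hγe : γ = α / s := by
    have h4 : 4 * N * α - 1 = s := by linarith
    rw [hγ, h4]
  have hγs : γ * (s * (s - 1)) = 4 := by
    rw [hγe]
    field_simp
    linear_combination hαs
  have hRs : R = 4 * Real.sqrt N / s := by
    rw [hR, show (16 * N + 1 : ℝ) = 1 + 16 * N by ring]
  have hR0 : 0 ≤ R := by rw [hRs]; positivity
  have hR2 : R ^ 2 = 16 * N / s ^ 2 := by
    rw [hRs, div_pow, mul_pow, Real.sq_sqrt hN0.le]; norm_num
  have hs2ne : (s:ℝ) ^ 2 ≠ 0 := by positivity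
  refine ⟨?_, ?_, ?_⟩
  · rw [hc, hv, EuclideanSpace.dist_eq]
    simp only []
    simp [Fintype.sum_sum_type, Real.dist_eq, sq_abs]
    have hαγ : α - γ = 4 / s := by
      rw [hγe]
      field_simp
      linear_combination hαs
    rw [Real.sqrt_sq_eq_abs, abs_sub_comm, hαγ, abs_of_pos (by positivity), hRs]
    ring
  · intro k x hx w hw
    have hx2 : ∑ i, x i ^ 2 = 1 := by
      have h := hx
      rw [EuclideanSpace.norm_eq] at h
      simp only [Real.norm_eq_abs, sq_abs] at h
      have h0 : (0:ℝ) ≤ ∑ i, x i ^ 2 := by positivity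
      nlinarith [Real.sq_sqrt h0]
    rw [hc, hw, EuclideanSpace.dist_eq]
    simp [Fintype.sum_sum_type, Fintype.sum_prod_type, Real.dist_eq, sq_abs, apply_ite (· ^ 2),
      Finset.sum_ite_eq']
    have h1 : ∑ i : Fin 65, (Real.sqrt 15 / 4 * x i) ^ 2 = 15 / 16 := by
      have h15 : Real.sqrt 15 ^ 2 = 15 := Real.sq_sqrt (by norm_num)
      calc ∑ i : Fin 65, (Real.sqrt 15 / 4 * x i) ^ 2
          = ∑ i : Fin 65, 15 / 16 * x i ^ 2 := by
            refine Finset.sum_congr rfl fun i _ => ?_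
            rw [mul_pow, div_pow, h15]; norm_num
        _ = 15 / 16 := by rw [← Finset.mul_sum, hx2]; norm_num
    have h2 : ∑ l : Fin n, (γ - if l = k then (4⁻¹ : ℝ) else 0) ^ 2
        = N * γ ^ 2 + ((γ - 4⁻¹) ^ 2 - γ ^ 2) := by
      have e : ∀ l : Fin n, (γ - if l = k then (4⁻¹ : ℝ) else 0) ^ 2
          = γ ^ 2 + (if l = k then (γ - 4⁻¹) ^ 2 - γ ^ 2 else 0) := by
        intro l; split <;> ring
      rw [Finset.sum_congr rfl fun l _ => e l, Finset.sum_add_distrib, Finset.sum_const,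
        Finset.sum_ite_eq', Finset.card_univ, Fintype.card_fin]
      simp [nsmul_eq_mul]; exact Or.inl rfl
    rw [h1, h2]
    have key : N * γ ^ 2 * s ^ 2 - γ * s ^ 2 / 2 + s ^ 2 = 16 * N := by
      linear_combination (γ * s * (s + 1) / 16 - 1 / 4) * hγs - (γ ^ 2 * s ^ 2 - 16) / 16 * hs2
    have htot : 15 / 16 + (N * γ ^ 2 + ((γ - 4⁻¹) ^ 2 - γ ^ 2)) = R ^ 2 := by
      rw [hR2, eq_div_iff hs2ne]
      linear_combination key
    rw [htot]
    exact Real.sqrt_sq hR0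
  · have hlt : R ^ 2 < 1 := by
      rw [hR2, div_lt_one (by positivity)]
      nlinarith
    nlinarith
end
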